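/- In the setting of the discrete-time Crooks relation on a finite set $V$ (strictly positive distributions $\pi_0,\ldots,\pi_N$ with unnormalized versions $\gamma_n = Z_n\pi_n$, forward kernels $P_{F,n}$ with strictly positive pushforwards, work $W$ as defined there), the discrete-time Jarzynski equality holds: $\mathbb{E}_{\vec{P}}[\exp(-W(X_{0:N}))] = Z_N/Z_0$, where $\vec{P}$ is the forward path distribution $X_0 \sim \pi_0$, $X_n \mid X_{n-1} \sim P_{F,n}(\cdot \mid X_{n-1})$. -/

import Mathlib

open Finset

lemma path_key {V : Type*} [Fintype V] :
    ∀ (N : ℕ) (g : Fin N → V → V → ℝ) (μ : Fin (N + 1) → V → ℝ),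
    (∀ (n : Fin N) (y : V), ∑ v, μ n.castSucc v * g n v y = μ n.succ y) →
    ∑ x : Fin (N + 1) → V, μ 0 (x 0) * ∏ n : Fin N, g n (x n.castSucc) (x n.succ)
      = ∑ v, μ (Fin.last N) v := by
  intro N
  induction N with
  | zero =>
    intro g μ h
    rw [← Fintype.sum_equiv (Fin.consEquiv (fun _ : Fin 1 => V))
      (fun p => μ 0 ((Fin.cons p.1 p.2 : Fin 1 → V) 0) *
        ∏ n : Fin 0, g n ((Fin.cons p.1 p.2 : Fin 1 → V) n.castSucc)
          ((Fin.cons p.1 p.2 : Fin 1 → V) n.succ))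
      _ (fun p => rfl)]
    simp [Fintype.sum_prod_type, Fin.last]
  | succ N ih =>
    intro g μ h
    rw [← Fintype.sum_equiv (Fin.consEquiv (fun _ : Fin (N + 2) => V))
      (fun p => μ 0 ((Fin.cons p.1 p.2 : Fin (N + 2) → V) 0) *
        ∏ n : Fin (N + 1), g n ((Fin.cons p.1 p.2 : Fin (N + 2) → V) n.castSucc)
          ((Fin.cons p.1 p.2 : Fin (N + 2) → V) n.succ))
      _ (fun p => rfl)]
    rw [Fintype.sum_prod_type]
    have key : ∀ (t : Fin (N + 1) → V) (x0 : V),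
        μ 0 ((Fin.cons x0 t : Fin (N + 2) → V) 0) *
          ∏ n : Fin (N + 1), g n ((Fin.cons x0 t : Fin (N + 2) → V) n.castSucc)
            ((Fin.cons x0 t : Fin (N + 2) → V) n.succ)
        = (μ 0 x0 * g 0 x0 (t 0)) *
            ∏ n : Fin N, g n.succ (t n.castSucc) (t n.succ) := by
      intro t x0
      rw [Fin.prod_univ_succ]
      have h0 : ((0 : Fin (N + 1)).castSucc : Fin (N + 2)) = 0 := rfl
      have h1 : (Fin.cons x0 t : Fin (N + 2) → V) ((0 : Fin (N + 1)).succ) = t 0 := by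
        rw [show ((0 : Fin (N + 1)).succ) = (0 : Fin (N + 1)).succ from rfl, Fin.cons_succ]
      rw [h0, Fin.cons_zero, h1, mul_assoc]
      congr 1
    calc (∑ x0 : V, ∑ t : Fin (N + 1) → V,
          μ 0 ((Fin.cons x0 t : Fin (N + 2) → V) 0) *
            ∏ n : Fin (N + 1), g n ((Fin.cons x0 t : Fin (N + 2) → V) n.castSucc)
              ((Fin.cons x0 t : Fin (N + 2) → V) n.succ))
        = ∑ t : Fin (N + 1) → V, ∑ x0 : V, (μ 0 x0 * g 0 x0 (t 0)) *
            ∏ n : Fin N, g n.succ (t n.castSucc) (t n.succ) := by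
          rw [Finset.sum_comm]
          exact Finset.sum_congr rfl fun t _ => Finset.sum_congr rfl fun x0 _ => key t x0
      _ = ∑ t : Fin (N + 1) → V, (fun n v => μ n.succ v) (0 : Fin (N + 1)) (t 0) *
            ∏ n : Fin N, g n.succ (t n.castSucc) (t n.succ) := by
          refine Finset.sum_congr rfl fun t _ => ?_
          rw [← Finset.sum_mul]
          congr 1
          exact h 0 (t 0)
      _ = ∑ v, (fun n v => μ n.succ v) (Fin.last N) v := by
          exact ih (fun n => g n.succ) (fun n v => μ n.succ v)
            (fun n y => by simpa only [Fin.succ_castSucc] using h n.succ y)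
      _ = ∑ v, μ (Fin.last (N + 1)) v := by simp [Fin.succ_last]

/-- Discrete-time Jarzynski equality on a finite state space:
`𝔼_{forward path law}[exp(−W)] = Z_N / Z_0`. -/
theorem stmt_11 {V : Type*} [Fintype V] (N : ℕ)
    (γ : Fin (N + 1) → V → ℝ) (hγ : ∀ n x, 0 < γ n x)
    (PF : Fin N → V → V → ℝ) (hPF0 : ∀ n x y, 0 ≤ PF n x y)
    (hPFrow : ∀ n x, ∑ y, PF n x y = 1)
    (hpush : ∀ (n : Fin N) (y : V),
      0 < ∑ v, (γ n.castSucc v / ∑ w, γ n.castSucc w) * PF n v y) :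
    let Z : Fin (N + 1) → ℝ := fun n => ∑ v, γ n v
    let π : Fin (N + 1) → V → ℝ := fun n v => γ n v / Z n
    let push : Fin N → V → ℝ := fun n y => ∑ v, π n.castSucc v * PF n v y
    let W : (Fin (N + 1) → V) → ℝ := fun x => ∑ n : Fin N,
      (Real.log (γ n.castSucc (x n.succ) / γ n.succ (x n.succ)) +
        Real.log (push n (x n.succ) / π n.castSucc (x n.succ)))
    (∑ x : Fin (N + 1) → V,
        (π 0 (x 0) * ∏ n : Fin N, PF n (x n.castSucc) (x n.succ)) *
          Real.exp (-W x)) = Z (Fin.last N) / Z 0 := by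
  intro Z π push W
  rcases isEmpty_or_nonempty V with hV | hV
  · have hE : IsEmpty (Fin (N + 1) → V) := ⟨fun f => hV.elim (f 0)⟩
    simp [Z, Finset.univ_eq_empty]
  have hZpos : ∀ n, 0 < Z n := fun n =>
    Finset.sum_pos (fun v _ => hγ n v) Finset.univ_nonempty
  have hppos : ∀ (n : Fin N) y, 0 < push n y := fun n y => hpush n y
  have hπpos : ∀ n v, 0 < π n v := fun n v => div_pos (hγ n v) (hZpos n)
  have hsum : ∀ (n : Fin N) (y : V),
      ∑ v, γ n.castSucc v * PF n v y = Z n.castSucc * push n y := by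
    intro n y
    simp only [push, π, Finset.mul_sum]
    refine Finset.sum_congr rfl fun v _ => ?_
    have hZc : Z n.castSucc ≠ 0 := (hZpos _).ne'
    field_simp
  have hkey := path_key N
    (fun n v y => PF n v y * (γ n.succ y / (Z n.castSucc * push n y)))
    (fun n v => γ n v / Z 0) ?_
  · have hterm : ∀ x : Fin (N + 1) → V,
        (π 0 (x 0) * ∏ n : Fin N, PF n (x n.castSucc) (x n.succ)) *
          Real.exp (-W x)
        = γ 0 (x 0) / Z 0 * ∏ n : Fin N,
            PF n (x n.castSucc) (x n.succ) *
              (γ n.succ (x n.succ) / (Z n.castSucc * push n (x n.succ))) := by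
      intro x
      have hW : Real.exp (-W x) = ∏ n : Fin N,
          Real.exp (-(Real.log (γ n.castSucc (x n.succ) / γ n.succ (x n.succ)) +
            Real.log (push n (x n.succ) / π n.castSucc (x n.succ)))) := by
        have hWx : -W x = ∑ n : Fin N,
            -(Real.log (γ n.castSucc (x n.succ) / γ n.succ (x n.succ)) +
              Real.log (push n (x n.succ) / π n.castSucc (x n.succ))) := by
          simp only [W]
          exact (Finset.sum_neg_distrib _).symm
        rw [hWx, Real.exp_sum]
      have hfac : ∀ n : Fin N,
          Real.exp (-(Real.log (γ n.castSucc (x n.succ) / γ n.succ (x n.succ)) +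
            Real.log (push n (x n.succ) / π n.castSucc (x n.succ))))
          = γ n.succ (x n.succ) / (Z n.castSucc * push n (x n.succ)) := by
        intro n
        have ha : 0 < γ n.castSucc (x n.succ) / γ n.succ (x n.succ) :=
          div_pos (hγ _ _) (hγ _ _)
        have hb : 0 < push n (x n.succ) / π n.castSucc (x n.succ) :=
          div_pos (hppos _ _) (hπpos _ _)
        rw [Real.exp_neg, Real.exp_add, Real.exp_log ha, Real.exp_log hb]
        rw [show (γ n.castSucc (x n.succ) / γ n.succ (x n.succ)) *
            (push n (x n.succ) / π n.castSucc (x n.succ))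
            = (Z n.castSucc * push n (x n.succ)) / γ n.succ (x n.succ) by
          simp only [π]
          have h1 : γ n.castSucc (x n.succ) ≠ 0 := (hγ _ _).ne'
          have h2 : γ n.succ (x n.succ) ≠ 0 := (hγ _ _).ne'
          have h3 : Z n.castSucc ≠ 0 := (hZpos _).ne'
          have h4 : push n (x n.succ) ≠ 0 := (hppos _ _).ne'
          field_simp]
        rw [inv_div]
      rw [hW, mul_assoc, ← Finset.prod_mul_distrib]
      congr 1
      exact Finset.prod_congr rfl fun n _ => by rw [hfac n]
    calc (∑ x : Fin (N + 1) → V,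
          (π 0 (x 0) * ∏ n : Fin N, PF n (x n.castSucc) (x n.succ)) *
            Real.exp (-W x))
        = ∑ x : Fin (N + 1) → V, γ 0 (x 0) / Z 0 * ∏ n : Fin N,
            PF n (x n.castSucc) (x n.succ) *
              (γ n.succ (x n.succ) / (Z n.castSucc * push n (x n.succ))) :=
          Finset.sum_congr rfl fun x _ => hterm x
      _ = ∑ v, γ (Fin.last N) v / Z 0 := hkey
      _ = Z (Fin.last N) / Z 0 := by rw [← Finset.sum_div]
  · intro n y
    have h1 : ∀ v, (γ n.castSucc v / Z 0) *
        (PF n v y * (γ n.succ y / (Z n.castSucc * push n y)))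
        = (γ n.castSucc v * PF n v y) *
            (γ n.succ y / (Z 0 * (Z n.castSucc * push n y))) := by
      intro v
      field_simp
    simp only [h1]
    rw [← Finset.sum_mul, hsum n y]
    have hZ0 : Z 0 ≠ 0 := (hZpos 0).ne'
    have hZc : Z n.castSucc ≠ 0 := (hZpos _).ne'
    have hp : push n y ≠ 0 := (hppos n y).ne'
    field_simp
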